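/- Let (E,d) be a compact metric space, μ a Borel probability measure on C(E,E) concentrated on Lipschitz maps, and α ∈ (0,1] with r := sup_{x≠y} ∫ (d(T(x),T(y))/d(x,y))^α μ(dT) < 1. Then for every φ ∈ H_α(E) one has m_α(Pφ) ≤ r · m_α(φ), and consequently ‖Pφ‖_α ≤ r ‖φ‖_α + sup|φ|. -/

import Mathlib

open MeasureTheory Filter Set

/-- The Markov operator of an iterated function system:
`P φ x = ∫ φ (T x) dμ(T)`. -/
noncomputable def IFSP {E : Type*} [MetricSpace E] [MeasurableSpace C(E, E)]
    (μ : Measure C(E, E)) (φ : E → ℝ) : E → ℝ :=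
  fun x => ∫ T : C(E, E), φ (T x) ∂μ

/-- `sup |φ|`. -/
noncomputable def supAbs {E : Type*} (φ : E → ℝ) : ℝ := ⨆ x, |φ x|

/-- The α-Hölder seminorm `m_α(φ) = sup_{x≠y} |φ(x)-φ(y)|/d(x,y)^α`, expressed as the
least admissible Hölder constant. -/
noncomputable def holderSemi {E : Type*} [MetricSpace E] (α : ℝ) (φ : E → ℝ) : ℝ :=
  sInf {m : ℝ | 0 ≤ m ∧ ∀ x y : E, |φ x - φ y| ≤ m * dist x y ^ α}

/-- The α-Hölder norm `‖φ‖_α = sup|φ| + m_α(φ)`. -/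
noncomputable def holderNorm {E : Type*} [MetricSpace E] (α : ℝ) (φ : E → ℝ) : ℝ :=
  supAbs φ + holderSemi α φ

/-- if `r := sup_{x≠y} ∫ (d(Tx,Ty)/d(x,y))^α dμ(T) < 1`, then for every
α-Hölder `φ` one has `m_α(Pφ) ≤ r m_α(φ)` and `‖Pφ‖_α ≤ r ‖φ‖_α + sup|φ|`. -/
theorem stmt1 {E : Type*} [MetricSpace E] [CompactSpace E] [Nonempty E]
    [MeasurableSpace C(E, E)] [BorelSpace C(E, E)]
    (μ : Measure C(E, E)) [IsProbabilityMeasure μ]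
    (hLip : μ {T : C(E, E) | ∃ K : NNReal, LipschitzWith K ⇑T} = 1)
    (α : ℝ) (hα0 : 0 < α) (hα1 : α ≤ 1)
    (r : ℝ) (hr0 : 0 ≤ r) (hr1 : r < 1)
    (hr : ∀ x y : E, x ≠ y →
      ∫⁻ T : C(E, E), ENNReal.ofReal ((dist (T x) (T y) / dist x y) ^ α) ∂μ
        ≤ ENNReal.ofReal r)
    (φ : E → ℝ) (hφ : ∃ M : ℝ, ∀ x y : E, |φ x - φ y| ≤ M * dist x y ^ α) :
    (∀ x y : E, |IFSP μ φ x - IFSP μ φ y| ≤ r * holderSemi α φ * dist x y ^ α) ∧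
      holderNorm α (IFSP μ φ) ≤ r * holderNorm α φ + supAbs φ := by
  obtain ⟨M, hM⟩ := hφ
  set S : Set ℝ := {m : ℝ | 0 ≤ m ∧ ∀ x y : E, |φ x - φ y| ≤ m * dist x y ^ α} with hS
  set m := holderSemi α φ with hm_def
  have hMem : max M 0 ∈ S := by
    refine ⟨le_max_right _ _, fun x y => (hM x y).trans ?_⟩
    exact mul_le_mul_of_nonneg_right (le_max_left _ _) (Real.rpow_nonneg dist_nonneg α)
  have hne : S.Nonempty := ⟨_, hMem⟩
  have hbdd : BddBelow S := ⟨0, fun a ha => ha.1⟩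
  have hm0 : 0 ≤ m := le_csInf hne fun a ha => ha.1
  have hmφ : ∀ x y : E, |φ x - φ y| ≤ m * dist x y ^ α := by
    intro x y
    rcases eq_or_ne x y with h | h
    · simp [h, Real.zero_rpow hα0.ne']
    · have hd : 0 < dist x y := dist_pos.mpr h
      have hdα : 0 < dist x y ^ α := Real.rpow_pos_of_pos hd α
      rw [← div_le_iff₀ hdα]
      exact le_csInf hne fun a ha => by
        rw [div_le_iff₀ hdα]; exact ha.2 x y
  have hφcont : Continuous φ := by
    rw [Metric.continuous_iff]
    intro x ε hε
    have hm1 : (0:ℝ) < m + 1 := by linarith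
    refine ⟨(ε / (m + 1)) ^ α⁻¹,
      Real.rpow_pos_of_pos (div_pos hε hm1) _, fun y hy => ?_⟩
    have h1 : dist (φ y) (φ x) ≤ m * dist y x ^ α := by
      rw [Real.dist_eq]; exact hmφ y x
    have h2 : dist y x ^ α ≤ ε / (m + 1) := by
      calc dist y x ^ α ≤ ((ε / (m + 1)) ^ α⁻¹) ^ α :=
            Real.rpow_le_rpow dist_nonneg hy.le hα0.le
        _ = ε / (m + 1) := Real.rpow_inv_rpow (by positivity) hα0.ne'
    have h3 : m * (ε / (m + 1)) < ε := by
      rw [mul_div_assoc', div_lt_iff₀ hm1]; nlinarith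
    calc dist (φ y) (φ x) ≤ m * (ε / (m + 1)) :=
          h1.trans (mul_le_mul_of_nonneg_left h2 hm0)
      _ < ε := h3
  obtain ⟨C, hC⟩ : ∃ C : ℝ, ∀ x, |φ x| ≤ C := by
    obtain ⟨x₀, _, hx₀⟩ := isCompact_univ.exists_isMaxOn univ_nonempty
      (hφcont.abs.continuousOn (s := univ))
    exact ⟨|φ x₀|, fun x => hx₀ (mem_univ x)⟩
  have hint : ∀ x : E, Integrable (fun T : C(E, E) => φ (T x)) μ := fun x =>
    ⟨(hφcont.comp (continuous_eval_const x)).aestronglyMeasurable,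
      HasFiniteIntegral.of_bounded (C := C)
        (Eventually.of_forall fun T => by simpa [Real.norm_eq_abs] using hC (T x))⟩
  have key : ∀ x y : E, |IFSP μ φ x - IFSP μ φ y| ≤ r * m * dist x y ^ α := by
    intro x y
    rcases eq_or_ne x y with h | h
    · simp [h, Real.zero_rpow hα0.ne', IFSP]
    · have hd : 0 < dist x y := dist_pos.mpr h
      have hdα : 0 < dist x y ^ α := Real.rpow_pos_of_pos hd α
      have hsub : IFSP μ φ x - IFSP μ φ y = ∫ T, (φ (T x) - φ (T y)) ∂μ :=
        (integral_sub (hint x) (hint y)).symm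
      rw [hsub]
      have h1 : |∫ T, (φ (T x) - φ (T y)) ∂μ| ≤
          (∫⁻ T, ENNReal.ofReal |φ (T x) - φ (T y)| ∂μ).toReal := by
        simpa [Real.norm_eq_abs] using
          norm_integral_le_lintegral_norm (μ := μ)
            (fun T : C(E, E) => φ (T x) - φ (T y))
      refine h1.trans ?_
      have h2 : ∫⁻ T, ENNReal.ofReal |φ (T x) - φ (T y)| ∂μ ≤
          ENNReal.ofReal (m * dist x y ^ α) * ENNReal.ofReal r := by
        calc ∫⁻ T, ENNReal.ofReal |φ (T x) - φ (T y)| ∂μ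
            ≤ ∫⁻ T, ENNReal.ofReal (m * dist x y ^ α) *
                ENNReal.ofReal ((dist (T x) (T y) / dist x y) ^ α) ∂μ := by
              refine lintegral_mono fun T => ?_
              rw [← ENNReal.ofReal_mul (by positivity)]
              refine ENNReal.ofReal_le_ofReal ?_
              have heq : m * dist x y ^ α * (dist (T x) (T y) / dist x y) ^ α
                  = m * dist (T x) (T y) ^ α := by
                rw [Real.div_rpow dist_nonneg hd.le]
                field_simp
              rw [heq]; exact hmφ (T x) (T y)
          _ = ENNReal.ofReal (m * dist x y ^ α) *
                ∫⁻ T, ENNReal.ofReal ((dist (T x) (T y) / dist x y) ^ α) ∂μ :=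
              lintegral_const_mul' _ _ ENNReal.ofReal_ne_top
          _ ≤ _ := mul_le_mul_right (hr x y h) _
      have h4 : (∫⁻ T, ENNReal.ofReal |φ (T x) - φ (T y)| ∂μ).toReal ≤
          m * dist x y ^ α * r := by
        refine ENNReal.toReal_le_of_le_ofReal (by positivity) ?_
        rw [ENNReal.ofReal_mul (by positivity : (0:ℝ) ≤ m * dist x y ^ α)]
        exact h2
      exact h4.trans_eq (by ring)
  refine ⟨key, ?_⟩
  have hsup0 : ∀ z, |φ z| ≤ supAbs φ := fun z =>
    le_ciSup (⟨C, fun v ⟨w, hw⟩ => hw ▸ hC w⟩ : BddAbove (range fun x => |φ x|)) z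
  have hsupφ0 : 0 ≤ supAbs φ := (abs_nonneg _).trans (hsup0 Classical.ofNonempty)
  have hPabs : ∀ x, |IFSP μ φ x| ≤ supAbs φ := by
    intro x
    calc |IFSP μ φ x| ≤ ∫ T, |φ (T x)| ∂μ := by
          simpa [Real.norm_eq_abs, IFSP] using
            norm_integral_le_integral_norm (μ := μ) (fun T : C(E, E) => φ (T x))
      _ ≤ ∫ _T, supAbs φ ∂μ :=
          integral_mono (hint x).abs (integrable_const _) (fun T => hsup0 (T x))
      _ = supAbs φ := by simp
  have hPsup : supAbs (IFSP μ φ) ≤ supAbs φ := ciSup_le hPabs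
  have hPsemi : holderSemi α (IFSP μ φ) ≤ r * m :=
    csInf_le ⟨0, fun a ha => ha.1⟩ ⟨by positivity, key⟩
  have : holderNorm α (IFSP μ φ) ≤ supAbs φ + r * m :=
    add_le_add hPsup hPsemi
  refine this.trans ?_
  simp only [holderNorm, ← hm_def]
  nlinarith [hsupφ0, hm0]
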